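/- arXiv:2208.14422 — 3 statements merged into one kernel-verified Lean document; each statement's English description precedes it below -/
import Mathlib

section
/- Fix an integer d ≥ 2 and an integer k with 1 ≤ k ≤ d². Consider four systems C, D, A, B, each with Hilbert space ℂ^d, the initial state ψ⁺_{CD} ⊗ ψ⁺_{AB}, a POVM {M_i}_{i=1}^k on the factor D ⊗ A, and unitaries U_i on the factor B. Define the entanglement fidelity of the constrained teleportation protocol as F({M_i, U_i}) = Σ_{i=1}^k tr[(ψ⁺_{CB} ⊗ I_{DA}) (I_C ⊗ M_i ⊗ U_i)(ψ⁺_{CD} ⊗ ψ⁺_{AB})(I_C ⊗ I_{DA} ⊗ U_i†)], where ψ⁺_{CB} is the projector onto the maximally entangled state of the factors C and B. Then the maximum of F({M_i, U_i}) over all k-element POVMs {M_i} on D ⊗ A and all families of unitaries {U_i} on B equals k/d². -/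
set_option maxHeartbeats 1000000

open Matrix BigOperators ComplexOrder

noncomputable section

/-- The maximally entangled state `|ψ⁺⟩ = (1/√n) Σᵢ |i⟩ ⊗ |i⟩` on `ℂ^n ⊗ ℂ^n`. -/
def mes (n : ℕ) : Fin n × Fin n → ℂ :=
  fun p => if p.1 = p.2 then ((1 / Real.sqrt n : ℝ) : ℂ) else 0

/-- The rank-one projector `ψ⁺ = |ψ⁺⟩⟨ψ⁺|` onto the maximally entangled state. -/
def mesProj (n : ℕ) : Matrix (Fin n × Fin n) (Fin n × Fin n) ℂ :=
  Matrix.of fun p q => mes n p * (starRingEnd ℂ) (mes n q)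

/-- Index type for the four systems, ordered as (C, D, A, B), each of dimension `n`. -/
abbrev I4 (n : ℕ) := Fin n × Fin n × Fin n × Fin n

/-- `ψ⁺_{CB} ⊗ I_{DA}` as an operator on C ⊗ D ⊗ A ⊗ B. -/
def psiCB (n : ℕ) : Matrix (I4 n) (I4 n) ℂ :=
  Matrix.of fun p q =>
    mesProj n (p.1, p.2.2.2) (q.1, q.2.2.2) *
      (if p.2.1 = q.2.1 ∧ p.2.2.1 = q.2.2.1 then 1 else 0)

/-- The initial state `ψ⁺_{CD} ⊗ ψ⁺_{AB}` as an operator on C ⊗ D ⊗ A ⊗ B. -/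
def psiInit (n : ℕ) : Matrix (I4 n) (I4 n) ℂ :=
  Matrix.of fun p q =>
    mesProj n (p.1, p.2.1) (q.1, q.2.1) *
      mesProj n (p.2.2.1, p.2.2.2) (q.2.2.1, q.2.2.2)

/-- `I_C ⊗ M_{DA} ⊗ U_B` as an operator on C ⊗ D ⊗ A ⊗ B. -/
def opMid (n : ℕ) (M : Matrix (Fin n × Fin n) (Fin n × Fin n) ℂ)
    (U : Matrix (Fin n) (Fin n) ℂ) : Matrix (I4 n) (I4 n) ℂ :=
  Matrix.of fun p q =>
    (if p.1 = q.1 then 1 else 0) * M (p.2.1, p.2.2.1) (q.2.1, q.2.2.1) *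
      U p.2.2.2 q.2.2.2

/-- `I_C ⊗ I_{DA} ⊗ V_B` as an operator on C ⊗ D ⊗ A ⊗ B. -/
def opB (n : ℕ) (V : Matrix (Fin n) (Fin n) ℂ) : Matrix (I4 n) (I4 n) ℂ :=
  Matrix.of fun p q =>
    (if p.1 = q.1 ∧ p.2.1 = q.2.1 ∧ p.2.2.1 = q.2.2.1 then 1 else 0) *
      V p.2.2.2 q.2.2.2

/-- The entanglement fidelity
`F({Mᵢ, Uᵢ}) = Σᵢ tr[(ψ⁺_{CB} ⊗ I_{DA})(I_C ⊗ Mᵢ ⊗ Uᵢ)(ψ⁺_{CD} ⊗ ψ⁺_{AB})(I_C ⊗ I_{DA} ⊗ Uᵢ†)]`. -/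
def telFid (n k : ℕ) (M : Fin k → Matrix (Fin n × Fin n) (Fin n × Fin n) ℂ)
    (U : Fin k → Matrix (Fin n) (Fin n) ℂ) : ℝ :=
  (∑ i, Matrix.trace (psiCB n * opMid n (M i) (U i) * psiInit n * opB n (U i)ᴴ)).re

namespace CTele

lemma mesProj_apply (n : ℕ) (p q : Fin n × Fin n) :
    mesProj n p q = if p.1 = p.2 ∧ q.1 = q.2 then ((n : ℂ))⁻¹ else 0 := by
  simp only [mesProj, mes, of_apply]
  by_cases h1 : p.1 = p.2 <;> by_cases h2 : q.1 = q.2 <;>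
    simp [h1, h2, Complex.conj_ofReal, ← Complex.ofReal_mul]
  rw [← mul_inv, ← Complex.ofReal_mul, Real.mul_self_sqrt (Nat.cast_nonneg n),
    Complex.ofReal_natCast]

lemma e1 (n : ℕ) (V : Matrix (Fin n) (Fin n) ℂ) (p q : I4 n) :
    (psiInit n * opB n V) p q =
    if p.1 = p.2.1 ∧ p.2.2.1 = p.2.2.2 ∧ q.1 = q.2.1 then
      ((n:ℂ)^2)⁻¹ * V q.2.2.1 q.2.2.2 else 0 := by
  simp only [Matrix.mul_apply, psiInit, opB, Matrix.of_apply, mesProj_apply,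
    Fintype.sum_prod_type]
  simp only [mul_ite, ite_mul, mul_zero, zero_mul, mul_one, one_mul,
    Finset.sum_ite_irrel, Finset.sum_const_zero, Finset.sum_ite_eq, Finset.sum_ite_eq',
    Finset.mem_univ, if_true, ite_and]
  split_ifs <;> (try tauto) <;> (try simp_all) <;> ring_nf <;> try tauto

lemma e2 (n : ℕ) (M : Matrix (Fin n × Fin n) (Fin n × Fin n) ℂ)
    (U : Matrix (Fin n) (Fin n) ℂ) (p q : I4 n) :
    (psiCB n * opMid n M U) p q =
    if p.1 = p.2.2.2 then
      (n:ℂ)⁻¹ * M (p.2.1, p.2.2.1) (q.2.1, q.2.2.1) * U q.1 q.2.2.2 else 0 := by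
  simp only [Matrix.mul_apply, psiCB, opMid, Matrix.of_apply, mesProj_apply,
    Fintype.sum_prod_type]
  simp only [mul_ite, ite_mul, mul_zero, zero_mul, mul_one, one_mul,
    Finset.sum_ite_irrel, Finset.sum_const_zero, Finset.sum_ite_eq, Finset.sum_ite_eq',
    Finset.mem_univ, if_true, ite_and]
  split_ifs <;> (try tauto) <;> (try simp_all) <;> ring_nf <;> try tauto

/-- The quadratic form `⟨v, M v⟩`. -/
def qf {n : ℕ} (M : Matrix (Fin n × Fin n) (Fin n × Fin n) ℂ)
    (v : Fin n × Fin n → ℂ) : ℂ :=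
  ∑ p, ∑ q, (starRingEnd ℂ) (v p) * M p q * v q

lemma trace_formula (n : ℕ) (hn : (n:ℂ) ≠ 0) (M : Matrix (Fin n × Fin n) (Fin n × Fin n) ℂ)
    (U : Matrix (Fin n) (Fin n) ℂ) :
    (psiCB n * opMid n M U * psiInit n * opB n Uᴴ).trace
    = qf M (fun p => U p.1 p.2) / (n : ℂ) ^ 3 := by
  rw [mul_assoc (psiCB n * opMid n M U)]
  have h1 : psiInit n * opB n Uᴴ = Matrix.of (fun p q : I4 n =>
      if p.1 = p.2.1 ∧ p.2.2.1 = p.2.2.2 ∧ q.1 = q.2.1 then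
        ((n:ℂ)^2)⁻¹ * Uᴴ q.2.2.1 q.2.2.2 else 0) := by
    ext p q; rw [e1]; rfl
  have h2 : psiCB n * opMid n M U = Matrix.of (fun p q : I4 n =>
      if p.1 = p.2.2.2 then
        (n:ℂ)⁻¹ * M (p.2.1, p.2.2.1) (q.2.1, q.2.2.1) * U q.1 q.2.2.2 else 0) := by
    ext p q; rw [e2]; rfl
  rw [h1, h2]
  simp only [Matrix.trace, Matrix.diag, Matrix.mul_apply, Matrix.of_apply,
    Matrix.conjTranspose_apply]
  simp only [mul_ite, ite_mul, mul_zero, zero_mul, mul_one, one_mul, ite_and]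
  simp only [Fintype.sum_prod_type]
  simp only [Finset.sum_ite_irrel, Finset.sum_const_zero, Finset.sum_ite_eq, Finset.sum_ite_eq',
    Finset.mem_univ, if_true]
  rw [qf, eq_div_iff (by positivity)]
  simp only [Finset.sum_mul, Fintype.sum_prod_type]
  apply Finset.sum_congr rfl; intro c _
  apply Finset.sum_congr rfl; intro a _
  apply Finset.sum_congr rfl; intro e _
  apply Finset.sum_congr rfl; intro f _
  field_simp
  simp only [Complex.star_def]

lemma qf_eq {n : ℕ} (M : Matrix (Fin n × Fin n) (Fin n × Fin n) ℂ)
    (v : Fin n × Fin n → ℂ) :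
    qf M v = dotProduct (star v) (M *ᵥ v) := by
  simp only [qf, dotProduct, Matrix.mulVec, Pi.star_apply, Complex.star_def]
  refine Finset.sum_congr rfl fun p _ => ?_
  rw [Finset.mul_sum]
  refine Finset.sum_congr rfl fun q _ => ?_
  ring

lemma qf_nonneg {n : ℕ} {M : Matrix (Fin n × Fin n) (Fin n × Fin n) ℂ}
    (hM : M.PosSemidef) (v : Fin n × Fin n → ℂ) : 0 ≤ qf M v := by
  rw [qf_eq]; exact hM.dotProduct_mulVec_nonneg v

lemma qf_add {n : ℕ} (A B : Matrix (Fin n × Fin n) (Fin n × Fin n) ℂ)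
    (v : Fin n × Fin n → ℂ) : qf (A + B) v = qf A v + qf B v := by
  simp [qf, mul_add, add_mul, Finset.sum_add_distrib]

lemma qf_sub {n : ℕ} (A B : Matrix (Fin n × Fin n) (Fin n × Fin n) ℂ)
    (v : Fin n × Fin n → ℂ) : qf (A - B) v = qf A v - qf B v := by
  simp [qf, mul_sub, sub_mul, Finset.sum_sub_distrib]

lemma qf_zero {n : ℕ} (v : Fin n × Fin n → ℂ) : qf (0 : Matrix (Fin n × Fin n) (Fin n × Fin n) ℂ) v = 0 := by
  simp [qf]

lemma qf_finset_sum {n : ℕ} {ι : Type*} (s : Finset ι)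
    (A : ι → Matrix (Fin n × Fin n) (Fin n × Fin n) ℂ) (v : Fin n × Fin n → ℂ) :
    qf (∑ j ∈ s, A j) v = ∑ j ∈ s, qf (A j) v := by
  classical
  induction s using Finset.induction_on with
  | empty => simp [qf_zero]
  | insert _ _ h ih => rw [Finset.sum_insert h, Finset.sum_insert h, qf_add, ih]

lemma qf_one {n : ℕ} (v : Fin n × Fin n → ℂ) :
    qf (1 : Matrix (Fin n × Fin n) (Fin n × Fin n) ℂ) v
    = ∑ p, (starRingEnd ℂ) (v p) * v p := by
  simp [qf, Matrix.one_apply, mul_ite, ite_mul, Finset.sum_ite_eq, Finset.sum_ite_eq']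

lemma vec_norm {n : ℕ} (U : Matrix (Fin n) (Fin n) ℂ)
    (hU : U ∈ Matrix.unitaryGroup (Fin n) ℂ) :
    ∑ p : Fin n × Fin n, (starRingEnd ℂ) (U p.1 p.2) * U p.1 p.2 = (n : ℂ) := by
  have h : star U * U = 1 := Matrix.mem_unitaryGroup_iff'.mp hU
  rw [Fintype.sum_prod_type, Finset.sum_comm]
  have : ∀ a : Fin n, ∑ c : Fin n, (starRingEnd ℂ) (U c a) * U c a = 1 := by
    intro a
    have := congrArg (fun X => X a a) h
    simpa [Matrix.mul_apply, Matrix.conjTranspose_apply, Matrix.one_apply] using this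
  simp [this]

/-! ### Upper bound -/

lemma telFid_le (d k : ℕ) (hd : 2 ≤ d)
    (M : Fin k → Matrix (Fin d × Fin d) (Fin d × Fin d) ℂ)
    (U : Fin k → Matrix (Fin d) (Fin d) ℂ)
    (hM : ∀ i, (M i).PosSemidef) (hsum : ∑ i, M i = 1)
    (hU : ∀ i, U i ∈ Matrix.unitaryGroup (Fin d) ℂ) :
    telFid d k M U ≤ (k : ℝ) / (d : ℝ) ^ 2 := by
  have hd0 : (d : ℂ) ≠ 0 := by
    simp only [ne_eq, Nat.cast_eq_zero]; omega
  have hdR : (0:ℝ) < (d : ℝ) := by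
    have : 0 < d := by omega
    exact_mod_cast this
  set v : Fin k → (Fin d × Fin d) → ℂ := fun i p => U i p.1 p.2 with hv
  have hqf_le : ∀ i, (qf (M i) (v i)).re ≤ (d : ℝ) := by
    intro i
    have htot : ∑ j, qf (M j) (v i) = (d : ℂ) := by
      rw [← qf_finset_sum, hsum, qf_one]
      exact vec_norm _ (hU i)
    have hle : qf (M i) (v i) ≤ (d : ℂ) := by
      rw [← htot]
      exact Finset.single_le_sum (f := fun j => qf (M j) (v i))
        (fun j _ => qf_nonneg (hM j) (v i)) (Finset.mem_univ i)
    have := (Complex.le_def.mp hle).1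
    simpa using this
  have hfid : telFid d k M U = ∑ i, (qf (M i) (v i)).re / (d:ℝ)^3 := by
    unfold telFid
    rw [Complex.re_sum]
    refine Finset.sum_congr rfl fun i _ => ?_
    rw [trace_formula d hd0]
    have h3 : ((d:ℂ))^3 = (((d:ℝ)^3 : ℝ) : ℂ) := by push_cast; ring
    rw [h3, Complex.div_ofReal_re]
  rw [hfid]
  have step : ∑ i, (qf (M i) (v i)).re / (d:ℝ)^3 ≤ ∑ _i : Fin k, (d:ℝ)/(d:ℝ)^3 := by
    apply Finset.sum_le_sum; intro i _
    gcongr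
    exact hqf_le i
  refine step.trans ?_
  rw [Finset.sum_const, Finset.card_univ, Fintype.card_fin]
  rw [nsmul_eq_mul]
  have : (d:ℝ) / (d:ℝ)^3 = 1 / (d:ℝ)^2 := by
    field_simp
  rw [this]
  rw [mul_one_div]


/-! ### Roots of unity and Weyl matrices -/

def zeta (d : ℕ) : ℂ := Complex.exp (2 * Real.pi * Complex.I / d)

lemma zeta_ne (d : ℕ) : zeta d ≠ 0 := Complex.exp_ne_zero _

lemma conj_zeta_pow (d m : ℕ) : (starRingEnd ℂ) ((zeta d)^m) = ((zeta d)^m)⁻¹ := by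
  rw [map_pow, ← inv_pow]
  congr 1
  rw [zeta, ← Complex.exp_conj, ← Complex.exp_neg]
  congr 1
  rw [show ((2:ℂ) * Real.pi * Complex.I / d) = ((2 * Real.pi / d : ℝ) : ℂ) * Complex.I by
    push_cast; ring]
  rw [_root_.map_mul, Complex.conj_ofReal, Complex.conj_I]
  ring

lemma conj_zeta_mul_self (d m : ℕ) : (starRingEnd ℂ) ((zeta d)^m) * (zeta d)^m = 1 := by
  rw [conj_zeta_pow, inv_mul_cancel₀ (pow_ne_zero _ (zeta_ne d))]

lemma sum_zeta (d : ℕ) (hd : d ≠ 0) (b c : Fin d) :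
    ∑ j : Fin d, (starRingEnd ℂ) ((zeta d)^((b:ℕ)*(j:ℕ))) * (zeta d)^((c:ℕ)*(j:ℕ))
    = if b = c then (d:ℂ) else 0 := by
  have hz : zeta d ≠ 0 := zeta_ne d
  have hprim : IsPrimitiveRoot (zeta d) d := Complex.isPrimitiveRoot_exp d hd
  set r : ℂ := (zeta d) ^ ((c:ℤ) - (b:ℤ)) with hr
  have hterm : ∀ j : Fin d,
      (starRingEnd ℂ) ((zeta d)^((b:ℕ)*(j:ℕ))) * (zeta d)^((c:ℕ)*(j:ℕ)) = r ^ (j:ℕ) := by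
    intro j
    rw [conj_zeta_pow, hr, ← zpow_natCast (zeta d) ((b:ℕ)*(j:ℕ)),
      ← zpow_natCast (zeta d) ((c:ℕ)*(j:ℕ)), ← _root_.zpow_neg,
      ← zpow_add₀ hz, ← zpow_natCast ((zeta d) ^ ((c:ℤ) - (b:ℤ))) (j:ℕ), ← _root_.zpow_mul]
    congr 1
    push_cast
    ring
  rw [Finset.sum_congr rfl (fun j _ => hterm j)]
  by_cases hbc : b = c
  · subst hbc
    have hone : r = 1 := by rw [hr, sub_self, zpow_zero]
    simp [hone]
  · rw [if_neg hbc]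
    have hr1 : r ≠ 1 := by
      intro h
      have hdvd := (hprim.zpow_eq_one_iff_dvd _).mp h
      have hb := b.isLt
      have hc := c.isLt
      rcases hdvd with ⟨t, ht⟩
      have ht' : (c:ℤ) - (b:ℤ) = d * t := ht
      have hd' : (0:ℤ) < d := by omega
      have htz : t = 0 := by
        by_contra htne
        rcases lt_or_gt_of_ne htne with h' | h'
        · nlinarith
        · nlinarith
      rw [htz, mul_zero] at ht'
      apply hbc
      apply Fin.ext
      omega
    have hrd : r ^ d = 1 := by
      have h2 : r ^ (d:ℤ) = 1 := by
        rw [hr, ← _root_.zpow_mul,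
          show ((c:ℤ) - (b:ℤ)) * d = (d:ℤ) * ((c:ℤ) - (b:ℤ)) from mul_comm _ _,
          _root_.zpow_mul, zpow_natCast, hprim.pow_eq_one, _root_.one_zpow]
      simpa [zpow_natCast] using h2
    rw [Fin.sum_univ_eq_sum_range (fun j => r ^ j) d, geom_sum_eq hr1, hrd]
    simp

/-- Weyl (shift-and-multiply) unitaries. -/
def Wm (d : ℕ) (a b : Fin d) : Matrix (Fin d) (Fin d) ℂ :=
  Matrix.of fun j m => (zeta d)^((b:ℕ)*(j:ℕ)) * (if j = m + a then 1 else 0)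

lemma conj_zeta_base_mul (d x : ℕ) :
    ((starRingEnd ℂ) (zeta d))^x * (zeta d)^x = 1 := by
  rw [← map_pow]; exact conj_zeta_mul_self d x

lemma Wm_unitary (d : ℕ) [NeZero d] (a b : Fin d) :
    Wm d a b ∈ Matrix.unitaryGroup (Fin d) ℂ := by
  rw [Matrix.mem_unitaryGroup_iff']
  ext m m'
  simp only [Matrix.mul_apply, Matrix.star_apply, Wm, Matrix.of_apply]
  have hterm : ∀ j : Fin d,
      star ((zeta d)^((b:ℕ)*(j:ℕ)) * (if j = m + a then (1:ℂ) else 0)) *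
        ((zeta d)^((b:ℕ)*(j:ℕ)) * (if j = m' + a then (1:ℂ) else 0))
      = if j = m + a then (if j = m' + a then 1 else 0) else 0 := by
    intro j
    by_cases h1 : j = m + a <;> by_cases h2 : j = m' + a <;>
      simp [h1, h2, Complex.star_def, conj_zeta_base_mul, conj_zeta_mul_self,
        apply_ite (starRingEnd ℂ)]
  rw [Finset.sum_congr rfl (fun j _ => hterm j)]
  rw [Finset.sum_ite_eq' Finset.univ (m + a) (fun j => if j = m' + a then (1:ℂ) else 0)]
  simp only [Finset.mem_univ, if_true]
  by_cases hm : m = m'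
  · subst hm; simp [Matrix.one_apply]
  · rw [if_neg (fun hc => hm (add_right_cancel hc)), Matrix.one_apply_ne hm]

lemma Wm_orth (d : ℕ) [NeZero d] (a b a' b' : Fin d) :
    ∑ p : Fin d × Fin d, (starRingEnd ℂ) (Wm d a b p.1 p.2) * Wm d a' b' p.1 p.2
    = if a = a' ∧ b = b' then (d:ℂ) else 0 := by
  have hd : d ≠ 0 := NeZero.ne d
  rw [Fintype.sum_prod_type, Finset.sum_comm]
  by_cases ha : a = a'
  · subst ha
    have inner : ∀ m : Fin d, ∑ j : Fin d,
        (starRingEnd ℂ) (Wm d a b j m) * Wm d a b' j m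
        = (starRingEnd ℂ) ((zeta d)^((b:ℕ)*(((m+a) : Fin d):ℕ)))
            * (zeta d)^((b':ℕ)*(((m+a) : Fin d):ℕ)) := by
      intro m
      have hterm : ∀ j : Fin d,
          (starRingEnd ℂ) (Wm d a b j m) * Wm d a b' j m
          = if j = m + a then (starRingEnd ℂ) ((zeta d)^((b:ℕ)*(j:ℕ)))
              * (zeta d)^((b':ℕ)*(j:ℕ)) else 0 := by
        intro j
        by_cases h1 : j = m + a <;> simp [Wm, h1]
      rw [Finset.sum_congr rfl (fun j _ => hterm j)]
      rw [Finset.sum_ite_eq' Finset.univ (m + a)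
        (fun j => (starRingEnd ℂ) ((zeta d)^((b:ℕ)*(j:ℕ))) * (zeta d)^((b':ℕ)*(j:ℕ)))]
      simp
    rw [Finset.sum_congr rfl (fun m _ => inner m)]
    have heq : ∑ m : Fin d,
        (starRingEnd ℂ) ((zeta d)^((b:ℕ)*(((m+a) : Fin d):ℕ)))
          * (zeta d)^((b':ℕ)*(((m+a) : Fin d):ℕ))
        = ∑ j : Fin d, (starRingEnd ℂ) ((zeta d)^((b:ℕ)*(j:ℕ))) * (zeta d)^((b':ℕ)*(j:ℕ)) :=
      Fintype.sum_equiv (Equiv.addRight a) _ _ (fun m => rfl)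
    rw [heq, sum_zeta d hd b b']
    by_cases hb : b = b' <;> simp [hb]
  · have inner0 : ∀ m : Fin d, ∑ j : Fin d,
        (starRingEnd ℂ) (Wm d a b j m) * Wm d a' b' j m = 0 := by
      intro m
      apply Finset.sum_eq_zero
      intro j _
      by_cases h1 : j = m + a
      · have h2 : j ≠ m + a' := by
          intro hc
          exact ha (add_left_cancel (h1 ▸ hc : m + a = m + a'))
        simp only [Wm, Matrix.of_apply, if_pos h1, if_neg h2, mul_zero, mul_one]
      · simp [Wm, h1]
    rw [Finset.sum_congr rfl (fun m _ => inner0 m)]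
    simp [ha]

/-! ### Rank-one POVM elements -/

def Pmat (n : ℕ) (v : Fin n × Fin n → ℂ) : Matrix (Fin n × Fin n) (Fin n × Fin n) ℂ :=
  Matrix.of fun p q => (n:ℂ)⁻¹ * (v p * (starRingEnd ℂ) (v q))

lemma Pmat_herm (n : ℕ) (v : Fin n × Fin n → ℂ) : (Pmat n v)ᴴ = Pmat n v := by
  ext p q
  simp only [Pmat, Matrix.conjTranspose_apply, Matrix.of_apply, star_mul', star_inv₀,
    Complex.star_def, Complex.conj_conj, map_natCast]
  ring

lemma Pmat_posSemidef (n : ℕ) (v : Fin n × Fin n → ℂ) : (Pmat n v).PosSemidef := by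
  set s : ℂ := ((Real.sqrt n : ℝ) : ℂ) with hs
  set A : Matrix Unit (Fin n × Fin n) ℂ :=
    Matrix.of fun (_ : Unit) q => s⁻¹ * (starRingEnd ℂ) (v q) with hA
  have key : Pmat n v = Aᴴ * A := by
    ext p q
    simp only [Matrix.mul_apply, Matrix.conjTranspose_apply, hA, Matrix.of_apply,
      Finset.univ_unique, Finset.sum_singleton, Pmat, star_mul', map_inv₀]
    have hcs : star s = s := by rw [hs, Complex.star_def, Complex.conj_ofReal]
    have hss : s⁻¹ * s⁻¹ = (n:ℂ)⁻¹ := by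
      rw [← mul_inv, hs, ← Complex.ofReal_mul, Real.mul_self_sqrt (Nat.cast_nonneg n),
        Complex.ofReal_natCast]
    have hcs2 : star (s⁻¹) = s⁻¹ := by
      simp [hs, Complex.star_def, map_inv₀, Complex.conj_ofReal]
    rw [hcs2, show star ((starRingEnd ℂ) (v p)) = v p from Complex.conj_conj (v p), ← hss]
    ring
  rw [key]
  exact Matrix.posSemidef_conjTranspose_mul_self A

lemma qf_Pmat (n : ℕ) (w u : Fin n × Fin n → ℂ) :
    qf (Pmat n w) u
    = (n:ℂ)⁻¹ * ((∑ p, (starRingEnd ℂ) (u p) * w p) * (∑ q, (starRingEnd ℂ) (w q) * u q)) := by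
  rw [Fintype.sum_mul_sum (fun p => (starRingEnd ℂ) (u p) * w p)
    (fun q => (starRingEnd ℂ) (w q) * u q), Finset.mul_sum, qf]
  refine Finset.sum_congr rfl fun p _ => ?_
  rw [Finset.mul_sum]
  refine Finset.sum_congr rfl fun q _ => ?_
  simp only [Pmat, Matrix.of_apply]
  ring

lemma Pmat_mul (n : ℕ) (u w : Fin n × Fin n → ℂ) :
    Pmat n u * Pmat n w = Matrix.of fun p q =>
      (n:ℂ)⁻¹ * (n:ℂ)⁻¹ * (∑ r, (starRingEnd ℂ) (u r) * w r)
        * (u p * (starRingEnd ℂ) (w q)) := by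
  ext p q
  simp only [Matrix.mul_apply, Matrix.of_apply, Finset.mul_sum, Finset.sum_mul]
  refine Finset.sum_congr rfl fun r _ => ?_
  simp only [Pmat, Matrix.of_apply]
  ring

end CTele

/-- In the constrained teleportation protocol with `k ≤ d²` measurement outcomes, the maximum
of the entanglement fidelity over all `k`-element POVMs on D ⊗ A and all families of unitaries
on B equals `k/d²`. -/
theorem constrained_teleportation_max (d k : ℕ) (hd : 2 ≤ d) (hk1 : 1 ≤ k) (hk2 : k ≤ d ^ 2) :
    IsGreatest
      {F : ℝ | ∃ (M : Fin k → Matrix (Fin d × Fin d) (Fin d × Fin d) ℂ)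
          (U : Fin k → Matrix (Fin d) (Fin d) ℂ),
          (∀ i, (M i).PosSemidef) ∧ (∑ i, M i = 1) ∧
          (∀ i, U i ∈ Matrix.unitaryGroup (Fin d) ℂ) ∧
          F = telFid d k M U}
      ((k : ℝ) / (d : ℝ) ^ 2) := by
  haveI : NeZero d := ⟨by omega⟩
  have hd0 : (d : ℂ) ≠ 0 := by simp only [ne_eq, Nat.cast_eq_zero]; omega
  constructor
  · -- membership : the optimal protocol
    have hkd : k ≤ d * d := by rw [← pow_two]; exact hk2
    set ι : Fin k → Fin d × Fin d := fun i => finProdFinEquiv.symm (Fin.castLE hkd i) with hι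
    have hinj : Function.Injective ι := by
      intro i j h
      exact Fin.castLE_injective hkd (finProdFinEquiv.symm.injective h)
    set Uc : Fin k → Matrix (Fin d) (Fin d) ℂ := fun i => CTele.Wm d (ι i).1 (ι i).2 with hUc
    set v : Fin k → (Fin d × Fin d → ℂ) := fun i p => Uc i p.1 p.2 with hv
    have hvo : ∀ i j, ∑ p, (starRingEnd ℂ) (v i p) * v j p = if i = j then (d:ℂ) else 0 := by
      intro i j
      have h1 := CTele.Wm_orth d (ι i).1 (ι i).2 (ι j).1 (ι j).2
      have h2 : ((ι i).1 = (ι j).1 ∧ (ι i).2 = (ι j).2) ↔ i = j := by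
        rw [← Prod.ext_iff]
        exact hinj.eq_iff
      calc ∑ p, (starRingEnd ℂ) (v i p) * v j p
          = if (ι i).1 = (ι j).1 ∧ (ι i).2 = (ι j).2 then (d:ℂ) else 0 := h1
        _ = if i = j then (d:ℂ) else 0 := by rw [if_congr h2 rfl rfl]
    set i₀ : Fin k := ⟨0, by omega⟩ with hi₀
    set Q : Matrix (Fin d × Fin d) (Fin d × Fin d) ℂ :=
      ∑ j ∈ Finset.univ.erase i₀, CTele.Pmat d (v j) with hQ
    set Mv : Fin k → Matrix (Fin d × Fin d) (Fin d × Fin d) ℂ :=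
      fun i => if i = i₀ then 1 - Q else CTele.Pmat d (v i) with hMv
    have hPP : ∀ j l, CTele.Pmat d (v j) * CTele.Pmat d (v l)
        = if j = l then CTele.Pmat d (v j) else 0 := by
      intro j l
      rw [CTele.Pmat_mul, hvo j l]
      by_cases hjl : j = l
      · subst hjl
        rw [if_pos rfl, if_pos rfl]
        ext p q
        simp only [Matrix.of_apply, CTele.Pmat]
        rw [mul_assoc ((d:ℂ)⁻¹) ((d:ℂ)⁻¹) (d:ℂ), inv_mul_cancel₀ hd0, mul_one]
      · rw [if_neg hjl, if_neg hjl]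
        ext p q
        simp
    have hQQ : Q * Q = Q := by
      rw [hQ]
      rw [Finset.sum_mul_sum _ _ _ (fun l => CTele.Pmat d (v l))]
      calc ∑ j ∈ Finset.univ.erase i₀, ∑ l ∈ Finset.univ.erase i₀,
            CTele.Pmat d (v j) * CTele.Pmat d (v l)
          = ∑ j ∈ Finset.univ.erase i₀, CTele.Pmat d (v j) := by
            refine Finset.sum_congr rfl fun j hj => ?_
            rw [Finset.sum_congr rfl fun l _ => hPP j l]
            rw [Finset.sum_ite_eq (Finset.univ.erase i₀) j (fun l => CTele.Pmat d (v j))]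
            rw [if_pos hj]
        _ = Q := rfl
    have hMsum : ∑ i, Mv i = 1 := by
      rw [← Finset.add_sum_erase Finset.univ Mv (Finset.mem_univ i₀)]
      rw [show Mv i₀ = 1 - Q from if_pos rfl]
      rw [Finset.sum_congr rfl
        (fun i hi => show Mv i = CTele.Pmat d (v i) from if_neg (Finset.ne_of_mem_erase hi))]
      rw [← hQ, sub_add_cancel]
    have hPSD : ∀ i, (Mv i).PosSemidef := by
      intro i
      by_cases hi : i = i₀
      · subst hi
        rw [show Mv i₀ = 1 - Q from if_pos rfl]
        have hQH : Qᴴ = Q := by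
          rw [hQ, Matrix.conjTranspose_sum]
          exact Finset.sum_congr rfl (fun j _ => CTele.Pmat_herm d (v j))
        have h1 : (1 - Q)ᴴ = 1 - Q := by
          rw [Matrix.conjTranspose_sub, Matrix.conjTranspose_one, hQH]
        have h2 : (1 - Q) * (1 - Q) = 1 - Q := by
          rw [mul_sub, mul_one, sub_mul, one_mul, hQQ, sub_self, sub_zero]
        have h3 := Matrix.posSemidef_conjTranspose_mul_self (1 - Q)
        rw [h1, h2] at h3
        exact h3
      · rw [show Mv i = CTele.Pmat d (v i) from if_neg hi]
        exact CTele.Pmat_posSemidef d (v i)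
    have hUni : ∀ i, Uc i ∈ Matrix.unitaryGroup (Fin d) ℂ :=
      fun i => CTele.Wm_unitary d (ι i).1 (ι i).2
    have hqf : ∀ i, CTele.qf (Mv i) (v i) = (d:ℂ) := by
      intro i
      by_cases hi : i = i₀
      · subst hi
        rw [show Mv i₀ = 1 - Q from if_pos rfl, CTele.qf_sub, hQ, CTele.qf_finset_sum,
          CTele.qf_one]
        have h1 : ∑ p, (starRingEnd ℂ) (v i₀ p) * v i₀ p = (d:ℂ) := by
          simpa using hvo i₀ i₀
        have h2 : ∀ j ∈ Finset.univ.erase i₀, CTele.qf (CTele.Pmat d (v j)) (v i₀) = 0 := by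
          intro j hj
          have hji : j ≠ i₀ := Finset.ne_of_mem_erase hj
          rw [CTele.qf_Pmat, hvo i₀ j, hvo j i₀, if_neg (Ne.symm hji), if_neg hji]
          ring
        rw [h1, Finset.sum_eq_zero h2, sub_zero]
      · rw [show Mv i = CTele.Pmat d (v i) from if_neg hi, CTele.qf_Pmat, hvo i i, if_pos rfl]
        rw [← mul_assoc, inv_mul_cancel₀ hd0, one_mul]
    have hfid : telFid d k Mv Uc = (k : ℝ) / (d : ℝ) ^ 2 := by
      unfold telFid
      have htr : ∀ i : Fin k,
          Matrix.trace (psiCB d * opMid d (Mv i) (Uc i) * psiInit d * opB d (Uc i)ᴴ)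
          = (d:ℂ) / (d:ℂ)^3 := by
        intro i
        rw [CTele.trace_formula d hd0]
        rw [show (fun p : Fin d × Fin d => Uc i p.1 p.2) = v i from rfl, hqf i]
      rw [Finset.sum_congr rfl (fun i _ => htr i)]
      rw [Finset.sum_const, Finset.card_univ, Fintype.card_fin, nsmul_eq_mul]
      have harith : (k:ℂ) * ((d:ℂ) / (d:ℂ)^3) = (((k:ℝ) / (d:ℝ)^2 : ℝ) : ℂ) := by
        push_cast
        field_simp
      rw [harith, Complex.ofReal_re]
    exact ⟨Mv, Uc, hPSD, hMsum, hUni, hfid.symm⟩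
  · -- upper bound
    rintro F ⟨M, U, hM, hsum, hU, rfl⟩
    exact CTele.telFid_le d k hd M U hM hsum hU
end
end

section
/- Fix an integer d ≥ 2. In the constrained teleportation of a d²-dimensional system using only d² classical messages (i.e., the setting of the constrained teleportation protocol with Hilbert space dimension d² and k = d² POVM elements), the maximal entanglement fidelity over all d²-element POVMs {M_i} on ℂ^{d²} ⊗ ℂ^{d²} and unitaries U_i on ℂ^{d²} of F({M_i, U_i}) = Σ_{i=1}^{d²} tr[(ψ⁺_{CB} ⊗ I_{DA})(I_C ⊗ M_i ⊗ U_i)(ψ⁺_{CD} ⊗ ψ⁺_{AB})(I_C ⊗ I_{DA} ⊗ U_i†)] equals d²/d⁴ = 1/d², where now each of C, D, A, B has Hilbert space ℂ^{d²} and ψ⁺ denotes the maximally entangled state on ℂ^{d²} ⊗ ℂ^{d²}. -/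
open Matrix BigOperators ComplexOrder

noncomputable section

/-- vectorization of a matrix -/
def vecU (n : ℕ) (U : Matrix (Fin n) (Fin n) ℂ) : Fin n × Fin n → ℂ := fun p => U p.1 p.2

lemma mesProj_apply (n : ℕ) (p q : Fin n × Fin n) :
    mesProj n p q = (if p.1 = p.2 then 1 else 0) * (if q.1 = q.2 then 1 else 0) * (1 / n : ℂ) := by
  simp only [mesProj, mes, Matrix.of_apply]
  split_ifs with h1 h2 h2 <;> simp_all
  rw [← mul_inv, ← Complex.ofReal_mul, Real.mul_self_sqrt (Nat.cast_nonneg n)]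
  push_cast
  ring

lemma hA1 (n : ℕ) (M : Matrix (Fin n × Fin n) (Fin n × Fin n) ℂ)
    (U : Matrix (Fin n) (Fin n) ℂ) :
    psiCB n * opMid n M U = Matrix.of (fun p q : I4 n =>
      (1 / n : ℂ) * (if p.1 = p.2.2.2 then 1 else 0) *
        M (p.2.1, p.2.2.1) (q.2.1, q.2.2.1) * U q.1 q.2.2.2) := by
  ext p q
  simp only [Matrix.mul_apply, psiCB, opMid, mesProj_apply, Matrix.of_apply,
    Fintype.sum_prod_type, ite_mul, mul_ite, mul_zero, zero_mul, mul_one, one_mul, ite_and,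
    Finset.mem_univ, if_true]
  rw [Fintype.sum_eq_single q.1 (fun b hb => by simp [hb]),
    Fintype.sum_eq_single p.2.1 (fun b hb => by simp [hb.symm]),
    Fintype.sum_eq_single p.2.2.1 (fun b hb => by simp [hb.symm]),
    Fintype.sum_eq_single q.1 (fun b hb => by simp [hb.symm])]
  simp
  split_ifs <;> ring

lemma hA2 (n : ℕ) (U : Matrix (Fin n) (Fin n) ℂ) :
    psiInit n * opB n Uᴴ = Matrix.of (fun p s : I4 n =>
      (1 / n : ℂ)^2 * (if p.1 = p.2.1 then 1 else 0) * (if p.2.2.1 = p.2.2.2 then 1 else 0) *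
        (if s.1 = s.2.1 then 1 else 0) * (starRingEnd ℂ) (U s.2.2.2 s.2.2.1)) := by
  ext p s
  simp only [Matrix.mul_apply, psiInit, opB, mesProj_apply, Matrix.of_apply, conjTranspose_apply,
    Fintype.sum_prod_type, ite_mul, mul_ite, mul_zero, zero_mul, mul_one, one_mul, ite_and,
    Finset.mem_univ, if_true]
  rw [Fintype.sum_eq_single s.1 (fun b hb => by simp [hb]),
    Fintype.sum_eq_single s.2.1 (fun b hb => by simp [hb]),
    Fintype.sum_eq_single s.2.2.1 (fun b hb => by simp [hb]),
    Fintype.sum_eq_single s.2.2.1 (fun b hb => by simp [hb.symm])]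
  simp
  split_ifs <;> ring

lemma trace_formula (n : ℕ) (M : Matrix (Fin n × Fin n) (Fin n × Fin n) ℂ)
    (U : Matrix (Fin n) (Fin n) ℂ) :
    Matrix.trace (psiCB n * opMid n M U * psiInit n * opB n Uᴴ)
      = (1 / (n:ℂ)) ^ 3 * (star (vecU n U) ⬝ᵥ (M *ᵥ vecU n U)) := by
  rw [Matrix.mul_assoc, hA1, hA2]
  simp only [Matrix.trace, Matrix.diag, Matrix.mul_apply, Matrix.of_apply,
    Fintype.sum_prod_type, ite_mul, mul_ite, mul_zero, zero_mul, mul_one, one_mul]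
  conv_lhs =>
    enter [2, p1]
    rw [Fintype.sum_eq_single p1 (fun b hb => by simp [hb.symm])]
    enter [2, p3]
    rw [Fintype.sum_eq_single p1 (fun b hb => by simp [hb.symm])]
    enter [2, s1]
    rw [Fintype.sum_eq_single s1 (fun b hb => by simp [hb.symm])]
    enter [2, s3]
    rw [Fintype.sum_eq_single s3 (fun b hb => by simp [hb.symm])]
  simp only [dotProduct, mulVec, vecU, Pi.star_apply, Fintype.sum_prod_type, Finset.mul_sum,
    if_true, eq_self_iff_true]
  refine Finset.sum_congr rfl fun _ _ => Finset.sum_congr rfl fun _ _ =>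
    Finset.sum_congr rfl fun _ _ => Finset.sum_congr rfl fun _ _ => ?_
  simp only [Complex.star_def]
  ring

/-- norm² of the vectorization of a unitary -/
lemma vecU_norm (n : ℕ) (U : Matrix (Fin n) (Fin n) ℂ)
    (hU : U ∈ Matrix.unitaryGroup (Fin n) ℂ) :
    star (vecU n U) ⬝ᵥ vecU n U = (n : ℂ) := by
  have h : Uᴴ * U = 1 := by
    have := (Matrix.mem_unitaryGroup_iff').mp hU
    simpa [Matrix.star_eq_conjTranspose] using this
  have htr : Matrix.trace (Uᴴ * U) = (n : ℂ) := by
    rw [h]; simp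
  rw [← htr]
  simp only [Matrix.trace, Matrix.diag, Matrix.mul_apply, conjTranspose_apply,
    dotProduct, vecU, Pi.star_apply, Fintype.sum_prod_type]
  rw [Finset.sum_comm]

lemma quad_le {m : Type*} [Fintype m] [DecidableEq m] (M : Matrix m m ℂ) (h : (1 - M).PosSemidef)
    (v : m → ℂ) : (star v ⬝ᵥ (M *ᵥ v)).re ≤ (star v ⬝ᵥ v).re := by
  have h2 := h.re_dotProduct_nonneg v
  simp only [sub_mulVec, one_mulVec, dotProduct_sub, map_sub, RCLike.re_to_complex,
    Complex.sub_re] at h2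
  linarith

lemma one_sub_psd {m : Type*} [Fintype m] [DecidableEq m] {k : ℕ}
    (M : Fin k → Matrix m m ℂ) (hM : ∀ i, (M i).PosSemidef) (hsum : ∑ i, M i = 1)
    (i : Fin k) : (1 - M i).PosSemidef := by
  have : (1 : Matrix m m ℂ) - M i = ∑ j ∈ Finset.univ.erase i, M j := by
    rw [← hsum, ← Finset.add_sum_erase _ _ (Finset.mem_univ i)]
    rw [add_sub_cancel_left]
  rw [this]
  refine Finset.sum_induction _ _ (fun a b ha hb => ha.add hb) Matrix.PosSemidef.zero
    (fun j _ => hM j)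

-- general upper bound
lemma telFid_le (n k : ℕ) (hn : 0 < n)
    (M : Fin k → Matrix (Fin n × Fin n) (Fin n × Fin n) ℂ)
    (U : Fin k → Matrix (Fin n) (Fin n) ℂ)
    (hM : ∀ i, (M i).PosSemidef) (hsum : ∑ i, M i = 1)
    (hU : ∀ i, U i ∈ Matrix.unitaryGroup (Fin n) ℂ) :
    telFid n k M U ≤ (k : ℝ) / (n : ℝ) ^ 2 := by
  have hnR : (0:ℝ) < (n:ℝ) := by exact_mod_cast hn
  rw [telFid, Complex.re_sum]
  have hterm : ∀ i, (Matrix.trace (psiCB n * opMid n (M i) (U i) * psiInit n *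
      opB n (U i)ᴴ)).re ≤ 1 / (n:ℝ)^2 := by
    intro i
    rw [trace_formula]
    have hcast : (1 / (n:ℂ))^3 = (((1 / (n:ℝ))^3 : ℝ) : ℂ) := by push_cast; ring
    rw [hcast, Complex.re_ofReal_mul]
    have hq : (star (vecU n (U i)) ⬝ᵥ (M i *ᵥ vecU n (U i))).re ≤ (n : ℝ) := by
      have := quad_le (M i) (one_sub_psd M hM hsum i) (vecU n (U i))
      rw [vecU_norm n (U i) (hU i)] at this
      simpa using this
    calc (1 / (n:ℝ))^3 * (star (vecU n (U i)) ⬝ᵥ (M i *ᵥ vecU n (U i))).re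
        ≤ (1 / (n:ℝ))^3 * (n:ℝ) := by
          apply mul_le_mul_of_nonneg_left hq
          positivity
      _ = 1 / (n:ℝ)^2 := by field_simp
  refine le_trans (Finset.sum_le_sum fun i (_ : i ∈ Finset.univ) => hterm i) ?_
  rw [Finset.sum_const, Finset.card_univ, Fintype.card_fin, nsmul_eq_mul]
  exact le_of_eq (by ring)

section example_construction
variable (n : ℕ) [NeZero n]

def exM (i : Fin n) : Matrix (Fin n × Fin n) (Fin n × Fin n) ℂ :=
  Matrix.diagonal (fun p => if p.2 = p.1 + i then 1 else 0)

def exU (i : Fin n) : Matrix (Fin n) (Fin n) ℂ :=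
  Matrix.of fun a b => if b = a + i then 1 else 0

lemma exM_psd (i : Fin n) : (exM n i).PosSemidef := by
  refine Matrix.PosSemidef.diagonal ?_
  intro p
  dsimp
  split <;> norm_num

lemma exM_sum : ∑ i, exM n i = 1 := by
  ext p q
  simp only [Matrix.sum_apply, exM, Matrix.diagonal, Matrix.of_apply, Matrix.one_apply]
  by_cases hpq : p = q
  · subst hpq
    simp only [eq_self_iff_true, if_true]
    rw [Fintype.sum_eq_single (p.2 - p.1) (fun b hb => by
      rw [if_neg]; intro h; exact hb (by rw [h, add_sub_cancel_left]))]
    rw [if_pos (by abel)]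
  · simp [hpq]

lemma exU_unitary (i : Fin n) : exU n i ∈ Matrix.unitaryGroup (Fin n) ℂ := by
  rw [Matrix.mem_unitaryGroup_iff]
  ext a c
  simp only [Matrix.mul_apply, Matrix.star_eq_conjTranspose, conjTranspose_apply, exU,
    Matrix.of_apply, Matrix.one_apply, apply_ite (star : ℂ → ℂ), star_one, star_zero, mul_ite, ite_mul,
    mul_one, one_mul, mul_zero, zero_mul]
  rw [Fintype.sum_eq_single (a + i) (fun b hb => by simp [hb])]
  rw [if_pos rfl]
  by_cases hac : a = c
  · subst hac; simp
  · rw [if_neg (fun h => hac (by exact add_right_cancel h)), if_neg hac]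

lemma exQF (i : Fin n) :
    star (vecU n (exU n i)) ⬝ᵥ (exM n i *ᵥ vecU n (exU n i)) = (n : ℂ) := by
  simp only [dotProduct, exM, Matrix.mulVec_diagonal, vecU, exU, Matrix.of_apply,
    Pi.star_apply, Fintype.sum_prod_type, apply_ite (star : ℂ → ℂ), star_one, star_zero, mul_ite, ite_mul,
    mul_one, one_mul, mul_zero, zero_mul]
  rw [Finset.sum_congr rfl (fun a (_ : a ∈ Finset.univ) =>
    Fintype.sum_eq_single (a + i) (fun b hb => by simp [hb]))]
  simp

lemma telFid_ex : telFid n n (exM n) (exU n) = 1 / (n : ℝ) := by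
  have hn : (0:ℝ) < n := by exact_mod_cast Nat.pos_of_ne_zero (NeZero.ne n)
  rw [telFid]
  have h : ∀ i : Fin n, Matrix.trace (psiCB n * opMid n (exM n i) (exU n i) * psiInit n *
      opB n (exU n i)ᴴ) = (1 / (n:ℂ))^3 * n := by
    intro i
    rw [trace_formula, exQF]
  rw [Finset.sum_congr rfl fun i _ => h i]
  rw [Finset.sum_const, Finset.card_univ, Fintype.card_fin, nsmul_eq_mul]
  have : ((n:ℂ) * ((1 / (n:ℂ))^3 * n)) = (((n:ℝ) * ((1 / (n:ℝ))^3 * n) : ℝ) : ℂ) := by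
    push_cast; ring
  rw [this, Complex.ofReal_re]
  field_simp

end example_construction


/-- Constrained teleportation of a `d²`-dimensional system with only `d²` classical messages:
the maximal entanglement fidelity over all `d²`-element POVMs and unitaries equals
`d²/d⁴ = 1/d²`. Here each system C, D, A, B has Hilbert space `ℂ^{d²}`. -/
theorem constrained_teleportation_joint (d : ℕ) (hd : 2 ≤ d) :
    IsGreatest
      {F : ℝ | ∃ (M : Fin (d ^ 2) → Matrix (Fin (d ^ 2) × Fin (d ^ 2)) (Fin (d ^ 2) × Fin (d ^ 2)) ℂ)
          (U : Fin (d ^ 2) → Matrix (Fin (d ^ 2)) (Fin (d ^ 2)) ℂ),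
          (∀ i, (M i).PosSemidef) ∧ (∑ i, M i = 1) ∧
          (∀ i, U i ∈ Matrix.unitaryGroup (Fin (d ^ 2)) ℂ) ∧
          F = telFid (d ^ 2) (d ^ 2) M U}
      ((d : ℝ) ^ 2 / (d : ℝ) ^ 4) := by
  have hd0 : d ≠ 0 := by omega
  have hdR : (d:ℝ) ≠ 0 := Nat.cast_ne_zero.mpr hd0
  haveI : NeZero (d ^ 2) := ⟨by positivity⟩
  constructor
  · refine ⟨exM (d ^ 2), exU (d ^ 2), fun i => exM_psd (d ^ 2) i, exM_sum (d ^ 2),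
      fun i => exU_unitary (d ^ 2) i, ?_⟩
    rw [telFid_ex]
    push_cast
    field_simp
  · rintro F ⟨M, U, hM, hsum, hU, rfl⟩
    refine le_trans (telFid_le (d ^ 2) (d ^ 2) (by positivity) M U hM hsum hU) ?_
    refine le_of_eq ?_
    push_cast
    field_simp
end
end

section
/- Fix an integer d ≥ 2 and a real number p ∈ [0,1]. Let x₁, x₂ ∈ [0,1] be real numbers satisfying the monogamy-type constraint x₁² + x₂² ≤ (d−1)/d + (x₁ + x₂)²/(d+1). Then p·x₁² + (1−p)·x₂² ≤ (1/2)·(1 + √(1 − 4(d²−1)p(1−p)/d²)). (This yields the upper bound on the success probability of the asymmetric two-input CNS-QRAC, where the two input states are chosen with probabilities p and 1−p.) -/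
/-- Key polynomial inequality (Cauchy–Schwarz / ellipse bound in cleared form). -/
lemma cnsqrac_key (d A u w : ℝ) (hd : 2 ≤ d) (hA : 0 ≤ A)
    (hslack : 0 ≤ u * (d - 1) * (2 * (d + 1) - d * u) - d * (d + 1) * w ^ 2) :
    (d * u + d * (d + 1) * A * w - (d + 1)) ^ 2 ≤ (d + 1) ^ 2 * (1 + (d ^ 2 - 1) * A ^ 2) := by
  have hpos : (0:ℝ) ≤ 1 + (d ^ 2 - 1) * A ^ 2 := by
    have h1 : (0:ℝ) ≤ (d ^ 2 - 1) * A ^ 2 := mul_nonneg (by nlinarith) (sq_nonneg A)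
    linarith
  nlinarith [mul_nonneg (mul_nonneg (by linarith : (0:ℝ) ≤ d) hpos) hslack,
    sq_nonneg (d * w - A * (d - 1) * (d * u - (d + 1)))]

/-- The core argument, with all auxiliary quantities opaque. -/
lemma cnsqrac_core (D q A u w S T K : ℝ) (hd2 : 2 ≤ D) (hA : A = |q|)
    (hwv : w = |T|)
    (hK0 : 0 ≤ K) (hKsq : K ^ 2 = 1 + (D ^ 2 - 1) * A ^ 2)
    (hslack : 0 ≤ u * (D - 1) * (2 * (D + 1) - D * u) - D * (D + 1) * w ^ 2)
    (hconS : D * (D + 1) * S ≤ (D - 1) * (D + 1) + D * u) :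
    D * S + D * q * T - D ≤ K := by
  have hA0 : 0 ≤ A := hA ▸ abs_nonneg q
  have hqw : q * T ≤ A * w := by
    calc q * T ≤ |q * T| := le_abs_self _
    _ = A * w := by rw [hA, hwv, abs_mul]
  have hkey := cnsqrac_key D A u w hd2 hA0 hslack
  have hXM : (D + 1) * (D * S + D * q * T - D) ≤ D * u + D * (D + 1) * A * w - (D + 1) := by
    have h1 : D * (D + 1) * (q * T) ≤ D * (D + 1) * (A * w) :=
      mul_le_mul_of_nonneg_left hqw (by nlinarith)
    nlinarith [hconS, h1]
  rcases le_or_gt (D * u + D * (D + 1) * A * w - (D + 1)) 0 with hM0 | hM0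
  · nlinarith [hXM, hM0, hK0]
  · have hK1 : (1:ℝ) ≤ K := by
      have h1 : (0:ℝ) ≤ (D ^ 2 - 1) * A ^ 2 := mul_nonneg (by nlinarith) (sq_nonneg A)
      nlinarith [hKsq, hK0]
    have hsq : (D * u + D * (D + 1) * A * w - (D + 1)) ^ 2 ≤ ((D + 1) * K) ^ 2 := by
      rw [mul_pow, hKsq]; exact hkey
    have hMK : D * u + D * (D + 1) * A * w - (D + 1) ≤ (D + 1) * K := by
      nlinarith [hsq, hM0, mul_nonneg (by linarith : (0:ℝ) ≤ D + 1) hK0]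
    nlinarith [hXM, hMK]

set_option maxHeartbeats 1000000 in
/-- Asymmetric two-input CNS-QRAC bound: if `x₁, x₂ ∈ [0,1]` satisfy the
entanglement-monogamy constraint `x₁² + x₂² ≤ (d−1)/d + (x₁ + x₂)²/(d+1)`, then for any
probability `p ∈ [0,1]`,
`p·x₁² + (1−p)·x₂² ≤ (1/2)(1 + √(1 − 4(d²−1)p(1−p)/d²))`. -/
theorem asymmetric_cnsqrac_bound (d : ℕ) (hd : 2 ≤ d) (p x₁ x₂ : ℝ)
    (hp : p ∈ Set.Icc (0 : ℝ) 1)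
    (hx₁ : x₁ ∈ Set.Icc (0 : ℝ) 1) (hx₂ : x₂ ∈ Set.Icc (0 : ℝ) 1)
    (hcon : x₁ ^ 2 + x₂ ^ 2 ≤ ((d : ℝ) - 1) / d + (x₁ + x₂) ^ 2 / ((d : ℝ) + 1)) :
    p * x₁ ^ 2 + (1 - p) * x₂ ^ 2
      ≤ (1 / 2) * (1 + Real.sqrt (1 - 4 * ((d : ℝ) ^ 2 - 1) * p * (1 - p) / (d : ℝ) ^ 2)) := by
  obtain ⟨hp0, hp1⟩ := hp
  have hd2 : (2:ℝ) ≤ (d:ℝ) := by exact_mod_cast hd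
  have hd0 : (0:ℝ) < (d:ℝ) := by linarith
  set D : ℝ := (d:ℝ) with hD
  -- abbreviations
  set q : ℝ := 2 * p - 1 with hq
  set A : ℝ := |q| with hA
  have hA0 : 0 ≤ A := abs_nonneg q
  have hAq : A ^ 2 = q ^ 2 := sq_abs q
  have harg : 1 - 4 * (D ^ 2 - 1) * p * (1 - p) / D ^ 2 = (1 + (D ^ 2 - 1) * A ^ 2) / D ^ 2 := by
    rw [hAq, hq]; field_simp; ring
  have hKpos : (0:ℝ) ≤ 1 + (D ^ 2 - 1) * A ^ 2 := by
    have h1 : (0:ℝ) ≤ (D ^ 2 - 1) * A ^ 2 := mul_nonneg (by nlinarith) (sq_nonneg A)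
    linarith
  set K : ℝ := Real.sqrt (1 + (D ^ 2 - 1) * A ^ 2) with hK
  have hK0 : 0 ≤ K := Real.sqrt_nonneg _
  have hKsq : K ^ 2 = 1 + (D ^ 2 - 1) * A ^ 2 := Real.sq_sqrt hKpos
  have hsqrt : Real.sqrt (1 - 4 * (D ^ 2 - 1) * p * (1 - p) / D ^ 2) = K / D := by
    rw [harg, Real.sqrt_div hKpos, Real.sqrt_sq hd0.le]
  rw [hsqrt]
  -- opaque auxiliary quantities
  obtain ⟨u, hu⟩ : ∃ u : ℝ, u = (x₁ + x₂) ^ 2 := ⟨_, rfl⟩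
  obtain ⟨T, hT⟩ : ∃ T : ℝ, T = x₁ ^ 2 - x₂ ^ 2 := ⟨_, rfl⟩
  obtain ⟨S, hS⟩ : ∃ S : ℝ, S = x₁ ^ 2 + x₂ ^ 2 := ⟨_, rfl⟩
  obtain ⟨w, hw⟩ : ∃ w : ℝ, w = |T| := ⟨_, rfl⟩
  have hu0 : 0 ≤ u := hu ▸ sq_nonneg _
  have hwsq : w ^ 2 = u * (x₁ - x₂) ^ 2 := by rw [hw, sq_abs, hT, hu]; ring
  -- cleared-denominator form of the constraint
  have hconS : D * (D + 1) * S ≤ (D - 1) * (D + 1) + D * u := by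
    have hmul := mul_le_mul_of_nonneg_left hcon (by positivity : (0:ℝ) ≤ D * (D + 1))
    have e1 : D * (D + 1) * ((D - 1) / D + (x₁ + x₂) ^ 2 / (D + 1))
        = (D - 1) * (D + 1) + D * ((x₁ + x₂) ^ 2) := by
      field_simp
    rw [e1] at hmul
    rw [hS, hu]
    linarith
  -- slack inequality
  have ht2 : D * (D + 1) * (x₁ - x₂) ^ 2 ≤ (D - 1) * (2 * (D + 1) - D * u) := by
    have hid : D * (D + 1) * (x₁ - x₂) ^ 2 = 2 * (D * (D + 1) * S) - D * (D + 1) * u := by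
      rw [hS, hu]; ring
    rw [hid]
    nlinarith [hconS]
  have hslack : 0 ≤ u * (D - 1) * (2 * (D + 1) - D * u) - D * (D + 1) * w ^ 2 := by
    have h2 := mul_le_mul_of_nonneg_left ht2 hu0
    rw [hwsq]
    nlinarith [h2]
  -- main bound via the core lemma
  have hmain : D * S + D * q * T - D ≤ K :=
    cnsqrac_core D q A u w S T K hd2 hA hw hK0 hKsq hslack hconS
  -- finish
  have hgoal : (1 / 2 : ℝ) * (1 + K / D) = (D + K) / (2 * D) := by
    field_simp
  rw [hgoal, le_div_iff₀ (by positivity)]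
  have hexp : (p * x₁ ^ 2 + (1 - p) * x₂ ^ 2) * (2 * D) = D * S + D * q * T := by
    rw [hS, hT, hq]; ring
  rw [hexp]
  linarith [hmain]
end
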